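/- Let V = V_0̄ ⊕ V_1̄ be a vector superspace over C and let g = gl(V) act on V in the standard way. Then gl(V) is a Berger superalgebra: the span of { R(x,y) : R ∈ R(gl(V)), x, y ∈ V } is all of gl(V), provided dim V_0̄ + dim V_1̄ ≥ 2. -/

import Mathlib

/-- A vector superspace structure on `V`: a pair of complementary subspaces. -/
structure SuperSpace (k V : Type*) [Field k] [AddCommGroup V] [Module k V] where
  even : Submodule k V
  odd : Submodule k V
  isCompl : IsCompl even odd

variable {k V : Type*} [Field k] [AddCommGroup V] [Module k V]

/-- The subspace of elements of parity `p`. -/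
def SuperSpace.part (S : SuperSpace k V) (p : ZMod 2) : Submodule k V :=
  if p = 0 then S.even else S.odd

/-- The sign `(-1)^p`. -/
def sg (k : Type*) [Field k] (p : ZMod 2) : k := if p = 1 then -1 else 1

/-- `A` is a homogeneous endomorphism of parity `p`. -/
def SuperSpace.HomEnd (S : SuperSpace k V) (p : ZMod 2) (A : Module.End k V) : Prop :=
  ∀ q x, x ∈ S.part q → A x ∈ S.part (q + p)

/-- Supercommutator of endomorphisms of parities `pa`, `pb`. -/
def sbr (pa pb : ZMod 2) (A B : Module.End k V) : Module.End k V :=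
  A * B - sg k (pa * pb) • (B * A)

/-- Super skew-symmetry of a bilinear map with operator values. -/
def SuperSkew (S : SuperSpace k V) (R : V →ₗ[k] V →ₗ[k] Module.End k V) : Prop :=
  ∀ p q x y, x ∈ S.part p → y ∈ S.part q → R x y = - sg k (p * q) • R y x

/-- The first Bianchi super-identity. -/
def Bianchi (S : SuperSpace k V) (R : V →ₗ[k] V →ₗ[k] Module.End k V) : Prop :=
  ∀ p q r x y z, x ∈ S.part p → y ∈ S.part q → z ∈ S.part r →
    R x y z + sg k (p * (q + r)) • R y z x + sg k (r * (p + q)) • R z x y = 0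

/-- `R` is an algebraic curvature tensor of type `g`. -/
def CurvOf (S : SuperSpace k V) (g : Submodule k (Module.End k V))
    (R : V →ₗ[k] V →ₗ[k] Module.End k V) : Prop :=
  (∀ x y, R x y ∈ g) ∧ SuperSkew S R ∧ Bianchi S R

/-- `R` is homogeneous of parity `pR`: `R x y` has parity `pR + |x| + |y|`. -/
def HomCurv (S : SuperSpace k V) (pR : ZMod 2)
    (R : V →ₗ[k] V →ₗ[k] Module.End k V) : Prop :=
  ∀ p q x y, x ∈ S.part p → y ∈ S.part q → S.HomEnd (pR + p + q) (R x y)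

section Aux
variable {V : Type*} [AddCommGroup V] [Module ℂ V]

lemma zmod2_cases (p : ZMod 2) : p = 0 ∨ p = 1 := by revert p; decide

lemma sg0 : sg ℂ 0 = 1 := by rw [sg, if_neg (by decide)]
lemma sg1 : sg ℂ 1 = -1 := by rw [sg, if_pos rfl]
lemma z2 : (1 + 1 : ZMod 2) = 0 := by decide

noncomputable def pr0 (S : SuperSpace ℂ V) : V →ₗ[ℂ] V :=
  S.even.subtype ∘ₗ S.even.projectionOnto S.odd S.isCompl

noncomputable def pr1 (S : SuperSpace ℂ V) : V →ₗ[ℂ] V :=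
  S.odd.subtype ∘ₗ S.odd.projectionOnto S.even S.isCompl.symm

lemma part0 (S : SuperSpace ℂ V) : S.part 0 = S.even := if_pos rfl
lemma part1 (S : SuperSpace ℂ V) : S.part 1 = S.odd := if_neg (by decide)

lemma pr0_even (S : SuperSpace ℂ V) {x : V} (hx : x ∈ S.even) : pr0 S x = x := by
  have := Submodule.projectionOnto_apply_left S.isCompl ⟨x, hx⟩
  simp [pr0, this]

lemma pr0_odd (S : SuperSpace ℂ V) {x : V} (hx : x ∈ S.odd) : pr0 S x = 0 := by
  have := Submodule.projectionOnto_apply_of_mem_right S.isCompl hx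
  simp [pr0, this]

lemma pr1_odd (S : SuperSpace ℂ V) {x : V} (hx : x ∈ S.odd) : pr1 S x = x := by
  have := Submodule.projectionOnto_apply_left S.isCompl.symm ⟨x, hx⟩
  simp [pr1, this]

lemma pr1_even (S : SuperSpace ℂ V) {x : V} (hx : x ∈ S.even) : pr1 S x = 0 := by
  have := Submodule.projectionOnto_apply_of_mem_right S.isCompl.symm hx
  simp [pr1, this]

lemma pr0_add_pr1 (S : SuperSpace ℂ V) (x : V) : pr0 S x + pr1 S x = x := by
  have := Submodule.projection_add_projection_eq_self S.isCompl x
  simpa [pr0, pr1] using this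

lemma pr0_mem (S : SuperSpace ℂ V) (x : V) : pr0 S x ∈ S.even := by
  simp [pr0]

lemma pr1_mem (S : SuperSpace ℂ V) (x : V) : pr1 S x ∈ S.odd := by
  simp [pr1]

end Aux

section Curv
variable {V : Type*} [AddCommGroup V] [Module ℂ V]

noncomputable def Rcon (φ : V →ₗ[ℂ] ℂ) (α β : V →ₗ[ℂ] Module.End ℂ V) :
    V →ₗ[ℂ] V →ₗ[ℂ] Module.End ℂ V :=
  LinearMap.mk₂ ℂ (fun x y => φ x • α y - φ y • β x)
    (fun x₁ x₂ y => by simp only [map_add, add_smul, smul_add]; module)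
    (fun c x y => by simp only [map_smul, smul_smul, smul_sub, smul_eq_mul]; module)
    (fun x y₁ y₂ => by simp only [map_add, add_smul, smul_add]; module)
    (fun c x y => by simp only [map_smul, smul_smul, smul_sub, smul_eq_mul]; module)

@[simp] lemma Rcon_apply (φ : V →ₗ[ℂ] ℂ) (α β : V →ₗ[ℂ] Module.End ℂ V) (x y : V) :
    Rcon φ α β x y = φ x • α y - φ y • β x := rfl

lemma Rcon_spec (S : SuperSpace ℂ V) (f : ZMod 2) (φ : V →ₗ[ℂ] ℂ)
    (α β : V →ₗ[ℂ] Module.End ℂ V)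
    (hφ : ∀ p x, x ∈ S.part p → p ≠ f → φ x = 0)
    (hα : ∀ p q x y, x ∈ S.part p → y ∈ S.part q → α x y = sg ℂ (p * q) • α y x)
    (hβ : ∀ p x, x ∈ S.part p → β x = sg ℂ (f * p) • α x) :
    SuperSkew S (Rcon φ α β) ∧ Bianchi S (Rcon φ α β) := by
  constructor
  · intro p q x y hx hy
    have hpx := hφ p x hx
    have hqy := hφ q y hy
    rw [Rcon_apply, Rcon_apply, hβ p x hx, hβ q y hy]
    rcases zmod2_cases f with rfl | rfl <;>
      rcases zmod2_cases p with rfl | rfl <;>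
      rcases zmod2_cases q with rfl | rfl <;>
    · try rw [hpx (by decide)]
      try rw [hqy (by decide)]
      simp only [sg0, sg1, z2, mul_zero, zero_mul, mul_one, one_mul, add_zero, zero_add,
        zero_smul, smul_zero, one_smul, neg_smul, neg_neg, sub_zero, zero_sub, neg_zero]
      try module
  · intro p q r x y z hx hy hz
    have hpx := hφ p x hx
    have hqy := hφ q y hy
    have hrz := hφ r z hz
    simp only [Rcon_apply, LinearMap.sub_apply, LinearMap.smul_apply]
    rw [hβ _ x hx, hβ _ y hy, hβ _ z hz]
    simp only [LinearMap.smul_apply]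
    rw [hα _ _ z x hz hx, hα _ _ y x hy hx, hα _ _ z y hz hy]
    rcases zmod2_cases f with rfl | rfl <;>
      rcases zmod2_cases p with rfl | rfl <;>
      rcases zmod2_cases q with rfl | rfl <;>
      rcases zmod2_cases r with rfl | rfl <;>
    · try rw [hpx (by decide)]
      try rw [hqy (by decide)]
      try rw [hrz (by decide)]
      simp only [sg0, sg1, z2, mul_zero, zero_mul, mul_one, one_mul, add_zero, zero_add,
        zero_smul, smul_zero, one_smul, neg_smul, neg_neg, sub_zero, zero_sub, neg_zero]
      try module

end Curv

section Alphas
variable {V : Type*} [AddCommGroup V] [Module ℂ V]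

noncomputable def alpha2 (ψ χ : V →ₗ[ℂ] ℂ) (v : V) : V →ₗ[ℂ] Module.End ℂ V :=
  ψ.smulRight (χ.smulRight v) + χ.smulRight (ψ.smulRight v)

noncomputable def alpha3 (χ χ' : V →ₗ[ℂ] ℂ) (v : V) : V →ₗ[ℂ] Module.End ℂ V :=
  χ.smulRight (χ'.smulRight v) - χ'.smulRight (χ.smulRight v)

@[simp] lemma alpha2_apply (ψ χ : V →ₗ[ℂ] ℂ) (v x y : V) :
    alpha2 ψ χ v x y = ψ x • χ y • v + χ x • ψ y • v := by
  simp [alpha2]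

@[simp] lemma alpha3_apply (χ χ' : V →ₗ[ℂ] ℂ) (v x y : V) :
    alpha3 χ χ' v x y = χ x • χ' y • v - χ' x • χ y • v := by
  simp [alpha3]

lemma alpha2_sym (S : SuperSpace ℂ V) (ψ χ : V →ₗ[ℂ] ℂ) (v : V)
    (hψ : ∀ x ∈ S.odd, ψ x = 0) :
    ∀ p q x y, x ∈ S.part p → y ∈ S.part q →
      alpha2 ψ χ v x y = sg ℂ (p * q) • alpha2 ψ χ v y x := by
  intro p q x y hx hy
  rcases zmod2_cases p with rfl | rfl <;> rcases zmod2_cases q with rfl | rfl <;>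
  · simp only [alpha2_apply]
    try rw [hψ x (by rwa [part1] at hx)]
    try rw [hψ y (by rwa [part1] at hy)]
    simp only [sg0, sg1, z2, mul_zero, zero_mul, mul_one, one_mul,
      zero_smul, smul_zero, one_smul, add_zero, zero_add, neg_zero, smul_neg]
    try module
end Alphas

section More
variable {V : Type*} [AddCommGroup V] [Module ℂ V]

lemma alpha3_sym (S : SuperSpace ℂ V) (χ χ' : V →ₗ[ℂ] ℂ) (v : V)
    (hχ : ∀ x ∈ S.even, χ x = 0) (hχ' : ∀ x ∈ S.even, χ' x = 0) :
    ∀ p q x y, x ∈ S.part p → y ∈ S.part q →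
      alpha3 χ χ' v x y = sg ℂ (p * q) • alpha3 χ χ' v y x := by
  intro p q x y hx hy
  rcases zmod2_cases p with rfl | rfl <;> rcases zmod2_cases q with rfl | rfl <;>
  · simp only [alpha3_apply]
    try rw [hχ x (by rwa [part0] at hx), hχ' x (by rwa [part0] at hx)]
    try rw [hχ y (by rwa [part0] at hy), hχ' y (by rwa [part0] at hy)]
    simp only [sg0, sg1, z2, mul_zero, zero_mul, mul_one, one_mul,
      zero_smul, smul_zero, one_smul, sub_zero, zero_sub, neg_zero, smul_neg, neg_smul,
      sub_self, neg_sub]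
    try module

noncomputable def sigma' (S : SuperSpace ℂ V) : V →ₗ[ℂ] V := pr0 S - pr1 S

lemma hbeta_gen (S : SuperSpace ℂ V) (α : V →ₗ[ℂ] Module.End ℂ V) :
    ∀ p x, x ∈ S.part p → (α ∘ₗ sigma' S) x = sg ℂ (1 * p) • α x := by
  intro p x hx
  rcases zmod2_cases p with rfl | rfl
  · rw [part0] at hx
    simp [sigma', pr0_even S hx, pr1_even S hx, sg0]
  · rw [part1] at hx
    simp [sigma', pr0_odd S hx, pr1_odd S hx, sg1]

lemma hbeta_zero (S : SuperSpace ℂ V) (α : V →ₗ[ℂ] Module.End ℂ V) :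
    ∀ p x, x ∈ S.part p → α x = sg ℂ (0 * p) • α x := by
  intro p x _; rw [zero_mul, sg0, one_smul]

lemma hphi_even (S : SuperSpace ℂ V) (η : V →ₗ[ℂ] ℂ) :
    ∀ p x, x ∈ S.part p → p ≠ 0 → (η ∘ₗ pr0 S) x = 0 := by
  intro p x hx hp
  rcases zmod2_cases p with rfl | rfl
  · exact absurd rfl hp
  · rw [part1] at hx
    simp [pr0_odd S hx]

lemma hphi_odd (S : SuperSpace ℂ V) (η : V →ₗ[ℂ] ℂ) :
    ∀ p x, x ∈ S.part p → p ≠ 1 → (η ∘ₗ pr1 S) x = 0 := by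
  intro p x hx hp
  rcases zmod2_cases p with rfl | rfl
  · rw [part0] at hx
    simp [pr1_even S hx]
  · exact absurd rfl hp

variable [FiniteDimensional ℂ V]

lemma exists_dual_pair (x y : V) (h : x ∉ Submodule.span ℂ {y}) :
    ∃ f : V →ₗ[ℂ] ℂ, f x = 1 ∧ f y = 0 := by
  set W := Submodule.span ℂ {y} with hW
  have hx0 : W.mkQ x ≠ 0 := by
    rw [Submodule.mkQ_apply, ne_eq, Submodule.Quotient.mk_eq_zero]
    exact h
  obtain ⟨g, hg⟩ : ∃ g : Module.Dual ℂ (V ⧸ W), g (W.mkQ x) ≠ 0 := by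
    by_contra hc; push_neg at hc
    exact hx0 ((Module.forall_dual_apply_eq_zero_iff ℂ _).1 hc)
  refine ⟨(g (W.mkQ x))⁻¹ • (g ∘ₗ W.mkQ), ?_, ?_⟩
  · simp only [LinearMap.smul_apply, LinearMap.coe_comp, Function.comp_apply, smul_eq_mul]
    exact inv_mul_cancel₀ hg
  · have hy : W.mkQ y = 0 := by
      rw [Submodule.mkQ_apply, Submodule.Quotient.mk_eq_zero]
      exact Submodule.mem_span_singleton_self y
    simp [hy]

lemma exists_dual_one {x : V} (h : x ≠ 0) : ∃ f : V →ₗ[ℂ] ℂ, f x = 1 := by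
  obtain ⟨f, h1, -⟩ := exists_dual_pair x 0 (by simpa [Submodule.span_zero_singleton])
  exact ⟨f, h1⟩

lemma exists_not_mem_span_singleton (hdim : 2 ≤ Module.finrank ℂ V) (y : V) :
    ∃ x, x ∉ Submodule.span ℂ {y} := by
  by_contra h; push_neg at h
  have htop : Submodule.span ℂ {y} = ⊤ := Submodule.eq_top_iff'.2 h
  rcases eq_or_ne y 0 with rfl | hy
  · rw [Submodule.span_zero_singleton] at htop
    have h0 : Module.finrank ℂ (⊥ : Submodule ℂ V) = Module.finrank ℂ V := by
      rw [htop, finrank_top]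
    rw [finrank_bot] at h0
    omega
  · have h1 : Module.finrank ℂ V = 1 := by
      rw [← finrank_top ℂ V, ← htop, finrank_span_singleton hy]
    omega

end More

section Key
variable {V : Type*} [AddCommGroup V] [Module ℂ V] [FiniteDimensional ℂ V]

lemma smulRight_zero_left (v : V) : (LinearMap.smulRight (0 : V →ₗ[ℂ] ℂ) v) = 0 := by
  ext z; simp

lemma key_even (S : SuperSpace ℂ V) (hdim : 2 ≤ Module.finrank ℂ V)
    (ξ : V →ₗ[ℂ] ℂ) (v : V) :
    (LinearMap.smulRight (ξ ∘ₗ pr0 S) v : Module.End ℂ V) ∈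
      Submodule.span ℂ
        {A : Module.End ℂ V | ∃ R, SuperSkew S R ∧ Bianchi S R ∧ ∃ x y, A = R x y} := by
  set ψ : V →ₗ[ℂ] ℂ := ξ ∘ₗ pr0 S with hψdef
  have hψodd : ∀ x ∈ S.odd, ψ x = 0 := fun x hx => by simp [hψdef, pr0_odd S hx]
  by_cases hodd : S.odd = ⊥
  · by_cases hψ0 : ψ = 0
    · rw [hψ0, smulRight_zero_left]; exact Submodule.zero_mem _
    · obtain ⟨y1, hy1⟩ : ∃ y1, ψ y1 ≠ 0 := by
        by_contra hc; push_neg at hc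
        exact hψ0 (LinearMap.ext fun z => by simp [hc])
      set y : V := (ψ y1)⁻¹ • y1 with hy
      have hψy : ψ y = 1 := by
        simp [hy, map_smul, smul_eq_mul, inv_mul_cancel₀ hy1]
      obtain ⟨x, hx⟩ := exists_not_mem_span_singleton hdim y
      obtain ⟨φ, hφx, hφy⟩ := exists_dual_pair x y hx
      set α := alpha2 ψ ψ ((2⁻¹ : ℂ) • v) with hα
      have hφv : ∀ p x', x' ∈ S.part p → p ≠ 0 → φ x' = 0 := by
        intro p x' hx' hp
        rcases zmod2_cases p with rfl | rfl
        · exact absurd rfl hp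
        · rw [part1, hodd, Submodule.mem_bot] at hx'
          simp [hx']
      obtain ⟨hsk, hbi⟩ := Rcon_spec S 0 φ α α hφv
        (alpha2_sym S ψ ψ _ hψodd) (hbeta_zero S α)
      refine Submodule.subset_span ⟨Rcon φ α α, hsk, hbi, x, y, ?_⟩
      ext z
      simp only [LinearMap.smulRight_apply, Rcon_apply, LinearMap.sub_apply,
        LinearMap.smul_apply, hα, alpha2_apply, hφx, hφy, hψy, one_smul, zero_smul,
        sub_zero, smul_smul]
      module
  · by_cases heven : S.even = ⊥
    · have hψ0 : ψ = 0 := LinearMap.ext fun z => by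
        have h := pr0_mem S z
        rw [heven, Submodule.mem_bot] at h
        simp [hψdef, h]
      rw [hψ0, smulRight_zero_left]; exact Submodule.zero_mem _
    · obtain ⟨x0, hx0m, hx0⟩ := (Submodule.ne_bot_iff _).1 heven
      obtain ⟨η, hη⟩ := exists_dual_one hx0
      obtain ⟨y0, hy0m, hy0⟩ := (Submodule.ne_bot_iff _).1 hodd
      obtain ⟨ζ, hζ⟩ := exists_dual_one hy0
      set φ : V →ₗ[ℂ] ℂ := η ∘ₗ pr0 S with hφdef
      set χ : V →ₗ[ℂ] ℂ := ζ ∘ₗ pr1 S with hχdef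
      set α := alpha2 ψ χ v with hα
      obtain ⟨hsk, hbi⟩ := Rcon_spec S 0 φ α α (hphi_even S η)
        (alpha2_sym S ψ χ v hψodd) (hbeta_zero S α)
      refine Submodule.subset_span ⟨Rcon φ α α, hsk, hbi, x0, y0, ?_⟩
      have e1 : φ x0 = 1 := by simp [hφdef, pr0_even S hx0m, hη]
      have e2 : φ y0 = 0 := by simp [hφdef, pr0_odd S hy0m]
      have e3 : ψ y0 = 0 := by simp [hψdef, pr0_odd S hy0m]
      have e4 : χ y0 = 1 := by simp [hχdef, pr1_odd S hy0m, hζ]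
      ext z
      simp only [LinearMap.smulRight_apply, Rcon_apply, LinearMap.sub_apply,
        LinearMap.smul_apply, hα, alpha2_apply, e1, e2, e3, e4, one_smul, zero_smul,
        sub_zero, smul_zero, zero_add]

lemma key_odd (S : SuperSpace ℂ V) (hdim : 2 ≤ Module.finrank ℂ V)
    (ξ : V →ₗ[ℂ] ℂ) (v : V) :
    (LinearMap.smulRight (ξ ∘ₗ pr1 S) v : Module.End ℂ V) ∈
      Submodule.span ℂ
        {A : Module.End ℂ V | ∃ R, SuperSkew S R ∧ Bianchi S R ∧ ∃ x y, A = R x y} := by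
  set χ : V →ₗ[ℂ] ℂ := ξ ∘ₗ pr1 S with hχdef
  have hχeven : ∀ x ∈ S.even, χ x = 0 := fun x hx => by simp [hχdef, pr1_even S hx]
  by_cases hodd : S.odd = ⊥
  · have hχ0 : χ = 0 := LinearMap.ext fun z => by
      have h := pr1_mem S z
      rw [hodd, Submodule.mem_bot] at h
      simp [hχdef, h]
    rw [hχ0, smulRight_zero_left]; exact Submodule.zero_mem _
  · by_cases heven : S.even = ⊥
    · -- case D : everything odd
      have hev0 : ∀ x ∈ S.even, (x : V) = 0 := by
        intro x hx; rwa [heven, Submodule.mem_bot] at hx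
      by_cases hχ0 : χ = 0
      · rw [hχ0, smulRight_zero_left]; exact Submodule.zero_mem _
      · obtain ⟨y1, hy1⟩ : ∃ y1, χ y1 ≠ 0 := by
          by_contra hc; push_neg at hc
          exact hχ0 (LinearMap.ext fun z => by simp [hc])
        set y0 : V := (χ y1)⁻¹ • y1 with hy0def
        have hχy0 : χ y0 = 1 := by
          simp [hy0def, map_smul, smul_eq_mul, inv_mul_cancel₀ hy1]
        obtain ⟨w, hw⟩ := exists_not_mem_span_singleton hdim y0
        set z0 : V := w - χ w • y0 with hz0def
        have hχz0 : χ z0 = 0 := by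
          simp [hz0def, map_sub, map_smul, smul_eq_mul, hχy0]
        have hz0 : z0 ∉ Submodule.span ℂ {y0} := by
          intro hmem
          exact hw (by
            have : w = z0 + χ w • y0 := by rw [hz0def]; abel
            rw [this]
            exact Submodule.add_mem _ hmem
              (Submodule.smul_mem _ _ (Submodule.mem_span_singleton_self y0)))
        obtain ⟨χ', hχ'z0, hχ'y0⟩ := exists_dual_pair z0 y0 hz0
        have hy0nz : y0 ∉ Submodule.span ℂ {z0} := by
          intro hmem
          obtain ⟨c, hc⟩ := Submodule.mem_span_singleton.1 hmem
          rw [← hc] at hχy0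
          simp [map_smul, smul_eq_mul, hχz0] at hχy0
        obtain ⟨φ, hφy0, hφz0⟩ := exists_dual_pair y0 z0 hy0nz
        set α := alpha3 χ χ' (-v) with hα
        have hφv : ∀ p x', x' ∈ S.part p → p ≠ 1 → φ x' = 0 := by
          intro p x' hx' hp
          rcases zmod2_cases p with rfl | rfl
          · rw [part0] at hx'
            rw [hev0 x' hx', map_zero]
          · exact absurd rfl hp
        obtain ⟨hsk, hbi⟩ := Rcon_spec S 1 φ α (α ∘ₗ sigma' S) hφv
          (alpha3_sym S χ χ' _ (fun x hx => by rw [hev0 x hx, map_zero])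
            (fun x hx => by rw [hev0 x hx, map_zero]))
          (hbeta_gen S α)
        refine Submodule.subset_span ⟨Rcon φ α (α ∘ₗ sigma' S), hsk, hbi, y0, z0, ?_⟩
        ext b
        simp only [LinearMap.smulRight_apply, Rcon_apply, LinearMap.sub_apply,
          LinearMap.smul_apply, hα, alpha3_apply, hφy0, hφz0, hχz0, hχ'z0, one_smul,
          zero_smul, sub_zero, smul_zero, zero_sub, smul_neg, neg_neg]
        module
    · -- case C
      obtain ⟨x0, hx0m, hx0⟩ := (Submodule.ne_bot_iff _).1 heven
      obtain ⟨η, hη⟩ := exists_dual_one hx0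
      obtain ⟨y0, hy0m, hy0⟩ := (Submodule.ne_bot_iff _).1 hodd
      obtain ⟨ζ, hζ⟩ := exists_dual_one hy0
      set ψ : V →ₗ[ℂ] ℂ := η ∘ₗ pr0 S with hψdef
      set φ : V →ₗ[ℂ] ℂ := ζ ∘ₗ pr1 S with hφdef
      have hψodd : ∀ x ∈ S.odd, ψ x = 0 := fun x hx => by simp [hψdef, pr0_odd S hx]
      set α := alpha2 ψ χ v with hα
      obtain ⟨hsk, hbi⟩ := Rcon_spec S 1 φ α (α ∘ₗ sigma' S) (hphi_odd S ζ)
        (alpha2_sym S ψ χ v hψodd) (hbeta_gen S α)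
      refine Submodule.subset_span ⟨Rcon φ α (α ∘ₗ sigma' S), hsk, hbi, y0, x0, ?_⟩
      have e1 : φ y0 = 1 := by simp [hφdef, pr1_odd S hy0m, hζ]
      have e2 : φ x0 = 0 := by simp [hφdef, pr1_even S hx0m]
      have e3 : ψ x0 = 1 := by simp [hψdef, pr0_even S hx0m, hη]
      have e4 : χ x0 = 0 := by simp [hχdef, pr1_even S hx0m]
      ext b
      simp only [LinearMap.smulRight_apply, Rcon_apply, LinearMap.sub_apply,
        LinearMap.smul_apply, hα, alpha2_apply, e1, e2, e3, e4, one_smul, zero_smul,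
        sub_zero, smul_zero, add_zero, zero_add]

end Key

/-- for a complex vector superspace `V` with `dim V₀ + dim V₁ ≥ 2`,
`gl(V)` is a Berger superalgebra: the span of the values of all algebraic curvature
tensors of type `gl(V)` is all of `gl(V)`. -/
theorem gl_is_berger {V : Type*} [AddCommGroup V] [Module ℂ V] [FiniteDimensional ℂ V]
    (S : SuperSpace ℂ V) (hdim : 2 ≤ Module.finrank ℂ V) :
    Submodule.span ℂ
      {A : Module.End ℂ V | ∃ R, SuperSkew S R ∧ Bianchi S R ∧ ∃ x y, A = R x y}
      = ⊤ := by
  rw [eq_top_iff]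
  rintro A -
  have key : ∀ (ξ : V →ₗ[ℂ] ℂ) (v : V), (LinearMap.smulRight ξ v : Module.End ℂ V) ∈
      Submodule.span ℂ
        {A : Module.End ℂ V | ∃ R, SuperSkew S R ∧ Bianchi S R ∧ ∃ x y, A = R x y} := by
    intro ξ v
    have hsplit : (LinearMap.smulRight ξ v : Module.End ℂ V)
        = LinearMap.smulRight (ξ ∘ₗ pr0 S) v + LinearMap.smulRight (ξ ∘ₗ pr1 S) v := by
      ext z
      simp only [LinearMap.smulRight_apply, LinearMap.add_apply, LinearMap.coe_comp,
        Function.comp_apply]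
      rw [← add_smul, ← map_add, pr0_add_pr1]
    rw [hsplit]
    exact Submodule.add_mem _ (key_even S hdim ξ v) (key_odd S hdim ξ v)
  classical
  have hA : A = ∑ i, LinearMap.smulRight ((Module.finBasis ℂ V).coord i)
      (A (Module.finBasis ℂ V i)) := by
    ext x
    rw [LinearMap.sum_apply]
    simp only [LinearMap.smulRight_apply, Module.Basis.coord_apply]
    symm
    calc ∑ i, (Module.finBasis ℂ V).repr x i • A (Module.finBasis ℂ V i)
        = A (∑ i, (Module.finBasis ℂ V).repr x i • Module.finBasis ℂ V i) := by
          rw [map_sum]; simp only [map_smul]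
      _ = A x := by rw [Module.Basis.sum_repr]
  rw [hA]
  exact Submodule.sum_mem _ fun i _ => key _ _
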